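/- arXiv:math/0109160 — 4 statements merged into one kernel-verified Lean document; each statement's English description precedes it below -/
import Mathlib

section
/- Let G be a metabelian group and let H be a subnormal subgroup of defect d in G. If H is an Inn-basis of G, then Z_i(H) ≤ Z_{i+d}(G) for every positive integer i. In particular, if H is nilpotent of class c then G is nilpotent of class at most c+d. -/
namespace InnBasisAux

open scoped commutatorElement

variable {G : Type*} [Group G]

/-- iterated commutator along a list -/
def itc (z : G) (l : List G) : G := l.foldl (fun a g => ⁅a, g⁆) z

@[simp] lemma itc_nil (z : G) : itc z [] = z := rfl

@[simp] lemma itc_cons (z g : G) (l : List G) : itc z (g :: l) = itc ⁅z, g⁆ l := rfl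

lemma itc_append (z : G) (l₁ l₂ : List G) : itc z (l₁ ++ l₂) = itc (itc z l₁) l₂ :=
  List.foldl_append ..

lemma itc_one : ∀ l : List G, itc (1 : G) l = 1
  | [] => rfl
  | g :: l => by
      rw [itc_cons, show ⁅(1:G), g⁆ = 1 by group]
      exact itc_one l

lemma memC (a b : G) : ⁅a, b⁆ ∈ commutator G :=
  Subgroup.commutator_mem_commutator (Subgroup.mem_top a) (Subgroup.mem_top b)

lemma conjC {a : G} (ha : a ∈ commutator G) (g : G) : g * a * g⁻¹ ∈ commutator G :=
  (Subgroup.commutator_normal ⊤ ⊤).conj_mem a ha g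

variable (hmetab : ⁅commutator G, commutator G⁆ = (⊥ : Subgroup G))

include hmetab in
lemma ccomm {a b : G} (ha : a ∈ commutator G) (hb : b ∈ commutator G) : a * b = b * a := by
  have h1 : ⁅a, b⁆ ∈ (⊥ : Subgroup G) := hmetab ▸ Subgroup.commutator_mem_commutator ha hb
  exact (commutatorElement_eq_one_iff_commute.mp (Subgroup.mem_bot.mp h1)).eq

include hmetab in
lemma comm_mul {a b : G} (ha : a ∈ commutator G) (hb : b ∈ commutator G) (g : G) :
    ⁅a * b, g⁆ = ⁅a, g⁆ * ⁅b, g⁆ := by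
  have hc : ⁅b, g⁆ * (g * a⁻¹ * g⁻¹) = (g * a⁻¹ * g⁻¹) * ⁅b, g⁆ :=
    ccomm hmetab (memC b g) (conjC (inv_mem ha) g)
  calc ⁅a * b, g⁆ = a * (⁅b, g⁆ * (g * a⁻¹ * g⁻¹)) := by
        simp only [commutatorElement_def]; group
    _ = a * ((g * a⁻¹ * g⁻¹) * ⁅b, g⁆) := by rw [hc]
    _ = ⁅a, g⁆ * ⁅b, g⁆ := by simp only [commutatorElement_def]; group

lemma mul_rot {p q r : G} (hpq : p * q = q * p) (hpr : p * r = r * p)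
    (hqr : q * r = r * q) : p * (r * q) = q * (r * p) := by
  calc p * (r * q) = (p * r) * q := (mul_assoc ..).symm
    _ = (r * p) * q := by rw [hpr]
    _ = r * (p * q) := mul_assoc ..
    _ = r * (q * p) := by rw [hpq]
    _ = (r * q) * p := (mul_assoc ..).symm
    _ = (q * r) * p := by rw [hqr]
    _ = q * (r * p) := mul_assoc ..

include hmetab in
lemma comm_swap {z : G} (hz : z ∈ commutator G) (g h : G) :
    ⁅⁅z, g⁆, h⁆ = ⁅⁅z, h⁆, g⁆ := by
  have hp : g * z⁻¹ * g⁻¹ ∈ commutator G := conjC (inv_mem hz) g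
  have hq : h * z⁻¹ * h⁻¹ ∈ commutator G := conjC (inv_mem hz) h
  have hr : (h * g) * z * (h * g)⁻¹ ∈ commutator G := conjC hz (h * g)
  have hs : (g * h) * z * (g * h)⁻¹ ∈ commutator G := conjC hz (g * h)
  have hA : ⁅⁅z, g⁆, h⁆
      = z * ((g * z⁻¹ * g⁻¹) * (((h * g) * z * (h * g)⁻¹) * (h * z⁻¹ * h⁻¹))) := by
    simp only [commutatorElement_def]; group
  have hB : ⁅⁅z, h⁆, g⁆
      = z * ((h * z⁻¹ * h⁻¹) * (((g * h) * z * (g * h)⁻¹) * (g * z⁻¹ * g⁻¹))) := by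
    simp only [commutatorElement_def]; group
  have hsr : (g * h) * z * (g * h)⁻¹ = (h * g) * z * (h * g)⁻¹ := by
    have h1 : ⁅g, h⁆ * ((h * g) * z * (h * g)⁻¹) = ((h * g) * z * (h * g)⁻¹) * ⁅g, h⁆ :=
      ccomm hmetab (memC g h) hr
    calc (g * h) * z * (g * h)⁻¹
        = ⁅g, h⁆ * ((h * g) * z * (h * g)⁻¹) * ⁅g, h⁆⁻¹ := by
          simp only [commutatorElement_def]; group
      _ = (h * g) * z * (h * g)⁻¹ := by rw [h1, mul_inv_cancel_right]
  rw [hA, hB, hsr]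
  have c1 : (g * z⁻¹ * g⁻¹) * ((h * g) * z * (h * g)⁻¹)
      = ((h * g) * z * (h * g)⁻¹) * (g * z⁻¹ * g⁻¹) := ccomm hmetab hp hr
  have c2 : (g * z⁻¹ * g⁻¹) * (h * z⁻¹ * h⁻¹) = (h * z⁻¹ * h⁻¹) * (g * z⁻¹ * g⁻¹) :=
    ccomm hmetab hp hq
  have c3 : ((h * g) * z * (h * g)⁻¹) * (h * z⁻¹ * h⁻¹)
      = (h * z⁻¹ * h⁻¹) * ((h * g) * z * (h * g)⁻¹) := ccomm hmetab hr hq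
  rw [mul_rot c2 c1 c3.symm]

lemma solve_aux {A B C P Q : G} (key : A * P = C * (B * Q))
    (h1 : A * P = P * A) (h2 : B * P = P * B) (h3 : B * C = C * B) :
    A * Q⁻¹ = B * P⁻¹ * C := by
  have hQ : Q = B⁻¹ * (C⁻¹ * (A * P)) := by rw [key]; group
  have h1' : A * P⁻¹ = P⁻¹ * A := (Commute.inv_right (show Commute A P from h1)).eq
  have h2' : P⁻¹ * B = B * P⁻¹ := ((Commute.inv_right (show Commute B P from h2)).symm).eq
  calc A * Q⁻¹ = A * P⁻¹ * (A⁻¹ * (C * B)) := by rw [hQ]; group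
    _ = P⁻¹ * A * (A⁻¹ * (C * B)) := by rw [h1']
    _ = P⁻¹ * (C * B) := by group
    _ = P⁻¹ * (B * C) := by rw [← h3]
    _ = P⁻¹ * B * C := by group
    _ = B * P⁻¹ * C := by rw [h2']

lemma comm_mul_right (x u v : G) : ⁅x, u * v⁆ = ⁅x, u⁆ * (u * ⁅x, v⁆ * u⁻¹) := by
  simp only [commutatorElement_def]; group

include hmetab in
lemma dagger (x g h : G) : ⁅⁅x, g⁆, h⁆ = ⁅⁅x, h⁆, g⁆ * ⁅x, ⁅g, h⁆⁆ := by
  have m3 : g * h = ⁅g, h⁆ * (h * g) := by simp only [commutatorElement_def]; group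
  have m4 : ⁅g, h⁆ * ⁅x, h * g⁆ * ⁅g, h⁆⁻¹ = ⁅x, h * g⁆ := by
    have hc : ⁅g, h⁆ * ⁅x, h * g⁆ = ⁅x, h * g⁆ * ⁅g, h⁆ :=
      ccomm hmetab (memC g h) (memC x (h * g))
    rw [hc, mul_inv_cancel_right]
  have key : ⁅x, g⁆ * (g * ⁅x, h⁆ * g⁻¹)
      = ⁅x, ⁅g, h⁆⁆ * (⁅x, h⁆ * (h * ⁅x, g⁆ * h⁻¹)) := by
    rw [← comm_mul_right x g h, m3, comm_mul_right x ⁅g, h⁆ (h * g), m4,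
      comm_mul_right x h g]
  have e1 : ⁅⁅x, g⁆, h⁆ = ⁅x, g⁆ * (h * ⁅x, g⁆ * h⁻¹)⁻¹ := by
    simp only [commutatorElement_def]; group
  have e2 : ⁅⁅x, h⁆, g⁆ = ⁅x, h⁆ * (g * ⁅x, h⁆ * g⁻¹)⁻¹ := by
    simp only [commutatorElement_def]; group
  rw [e1, e2]
  exact solve_aux key (ccomm hmetab (memC x g) (conjC (memC x h) g))
    (ccomm hmetab (memC x h) (conjC (memC x h) g))
    (ccomm hmetab (memC x h) (memC x ⁅g, h⁆))

include hmetab in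
lemma itc_mul : ∀ (l : List G) {a b : G}, a ∈ commutator G → b ∈ commutator G →
    itc (a * b) l = itc a l * itc b l
  | [], _, _, _, _ => rfl
  | g :: l, a, b, ha, hb => by
      rw [itc_cons, itc_cons, itc_cons, comm_mul hmetab ha hb g]
      exact itc_mul l (memC a g) (memC b g)

include hmetab in
lemma itc_swap : ∀ (l : List G) {z : G}, z ∈ commutator G → ∀ g : G,
    itc ⁅z, g⁆ l = ⁅itc z l, g⁆
  | [], _, _, _ => rfl
  | h :: l, z, hz, g => by
      rw [itc_cons, comm_swap hmetab hz g h, itc_swap l (memC z h) g, itc_cons]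

lemma uc_of_van : ∀ (n : ℕ) (z : G), (∀ l : List G, l.length = n → itc z l = 1) →
    z ∈ upperCentralSeries G n
  | 0, z, h => by
      have h0 : z = 1 := h [] rfl
      rw [upperCentralSeries, upperCentralSeries_zero, Subgroup.mem_bot]
      exact h0
  | n + 1, z, h =>
      mem_upperCentralSeries_succ_iff.mpr fun y =>
        uc_of_van n ⁅z, y⁆ fun l hl => h (y :: l) (by simp [hl])

lemma van_of_uc : ∀ (n : ℕ) (z : G), z ∈ upperCentralSeries G n →
    ∀ l : List G, l.length = n → itc z l = 1
  | 0, z, hz, l, hl => by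
      rw [upperCentralSeries, upperCentralSeries_zero, Subgroup.mem_bot] at hz
      rw [List.length_eq_zero_iff.mp hl, itc_nil, hz]
  | n + 1, z, hz, l, hl => by
      match l, hl with
      | y :: l', hl =>
        rw [itc_cons]
        exact van_of_uc n ⁅z, y⁆ (mem_upperCentralSeries_succ_iff.mp hz y) l'
          (by simpa using hl)

lemma Hvan (H : Subgroup G) : ∀ (i : ℕ) (x : H), x ∈ upperCentralSeries H i →
    ∀ l : List G, (∀ h ∈ l, h ∈ H) → l.length = i → itc (x : G) l = 1
  | 0, x, hx, l, _, hl => by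
      rw [upperCentralSeries, upperCentralSeries_zero, Subgroup.mem_bot] at hx
      rw [List.length_eq_zero_iff.mp hl, itc_nil, hx, OneMemClass.coe_one]
  | i + 1, x, hx, l, hlH, hl => by
      match l, hlH, hl with
      | y :: l', hlH, hl =>
        have hy : y ∈ H := hlH y (List.mem_cons_self)
        have hxy : (⁅x, (⟨y, hy⟩ : H)⁆ : H) ∈ upperCentralSeries H i :=
          mem_upperCentralSeries_succ_iff.mp hx ⟨y, hy⟩
        rw [itc_cons]
        have hcoe : ⁅(x : G), y⁆ = ((⁅x, (⟨y, hy⟩ : H)⁆ : H) : G) := rfl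
        rw [hcoe]
        exact Hvan H i _ hxy l' (fun h hh => hlH h (List.mem_cons_of_mem y hh))
          (by simpa using hl)

lemma Hvan_le (H : Subgroup G) (i : ℕ) (x : H) (hx : x ∈ upperCentralSeries H i)
    (l : List G) (hlH : ∀ h ∈ l, h ∈ H) (hi : i ≤ l.length) : itc (x : G) l = 1 := by
  have h1 : itc (x : G) (l.take i) = 1 :=
    Hvan H i x hx _ (fun h hh => hlH h (List.take_subset i l hh))
      (by rw [List.length_take]; exact Nat.min_eq_left hi)
  calc itc (x : G) l = itc (x : G) (l.take i ++ l.drop i) := by rw [List.take_append_drop]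
    _ = itc (itc (x : G) (l.take i)) (l.drop i) := itc_append ..
    _ = 1 := by rw [h1]; exact itc_one _

include hmetab in
lemma lemC {H : Subgroup G} (hbasis : Subgroup.centralizer (H : Set G) = Subgroup.center G) :
    ∀ (n : ℕ) (z : G), z ∈ commutator G →
      (∀ l : List G, (∀ h ∈ l, h ∈ H) → l.length = n → itc z l = 1) →
      ∀ l : List G, l.length = n → itc z l = 1
  | 0, z, _, hv, l, hl => by
      rw [List.length_eq_zero_iff.mp hl, itc_nil]
      exact hv [] (by simp) rfl
  | n + 1, z, hz, hv, l, hl => by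
      match l, hl with
      | w :: l', hl =>
        rw [itc_cons]
        refine lemC hbasis n ⁅z, w⁆ (memC z w) ?_ l' (by simpa using hl)
        intro l'' hlH'' hlen''
        rw [itc_swap hmetab l'' hz w]
        have hcent : itc z l'' ∈ Subgroup.centralizer (H : Set G) := by
          rw [Subgroup.mem_centralizer_iff]
          intro h hh
          have h1 : itc z (l'' ++ [h]) = 1 := by
            refine hv (l'' ++ [h]) ?_ (by simp [hlen''])
            intro a ha
            rcases List.mem_append.mp ha with ha' | ha'
            · exact hlH'' a ha'
            · rw [List.mem_singleton.mp ha']; exact hh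
          rw [itc_append] at h1
          have h2 : ⁅itc z l'', h⁆ = 1 := by simpa [itc] using h1
          exact (commutatorElement_eq_one_iff_commute.mp h2).symm.eq
        have hcen : itc z l'' ∈ Subgroup.center G := hbasis ▸ hcent
        exact commutatorElement_eq_one_iff_commute.mpr
          ((Subgroup.mem_center_iff.mp hcen w).symm)

lemma chain_le {H : Subgroup G} {d : ℕ} {c : ℕ → Subgroup G} (hc0 : c 0 = H)
    (hle : ∀ i < d, c i ≤ c (i + 1)) : ∀ j, j ≤ d → H ≤ c j
  | 0, _ => hc0.ge
  | j + 1, hj => (chain_le hc0 hle j (Nat.le_of_succ_le hj)).trans (hle j hj)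

include hmetab in
lemma ML {H : Subgroup G} {d : ℕ} {c : ℕ → Subgroup G} (hc0 : c 0 = H)
    (hle : ∀ i < d, c i ≤ c (i + 1))
    (hnorm : ∀ i < d, ∀ x ∈ c i, ∀ g ∈ c (i + 1), g * x * g⁻¹ ∈ c i) :
    ∀ (j : ℕ), j ≤ d → ∀ (i' : ℕ) (x : H), x ∈ upperCentralSeries H (i' + 1) →
      ∀ g ∈ c j, ∀ l : List G, (∀ h ∈ l, h ∈ H) → l.length = i' + j →
      itc ⁅(x : G), g⁆ l = 1
  | 0, _, i', x, hx, g, hg, l, hlH, hl => by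
      have hgH : g ∈ H := hc0 ▸ hg
      have h0 : itc ⁅(x : G), g⁆ l = itc (x : G) (g :: l) := rfl
      rw [h0]
      refine Hvan H (i' + 1) x hx (g :: l) ?_ (by simp [hl])
      intro h hh
      rcases List.mem_cons.mp hh with h1 | h2
      · rw [h1]; exact hgH
      · exact hlH h h2
  | j + 1, hj, i', x, hx, g, hg, l, hlH, hl => by
      cases l with
      | nil => simp only [List.length_nil] at hl; omega
      | cons h l' =>
        have hhH : h ∈ H := hlH h (List.mem_cons_self)
        have hjd : j < d := hj
        have hhcj : h ∈ c j := chain_le hc0 hle j (Nat.le_of_succ_le hj) hhH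
        have hlen' : l'.length = i' + j := by
          simp only [List.length_cons] at hl; omega
        have hghcj : ⁅g, h⁆ ∈ c j := by
          have h1 : g * h * g⁻¹ ∈ c j := hnorm j hjd h hhcj g hg
          have h2 : ⁅g, h⁆ = (g * h * g⁻¹) * h⁻¹ := by
            rw [commutatorElement_def]
          rw [h2]
          exact mul_mem h1 (inv_mem hhcj)
        rw [itc_cons, dagger hmetab (x : G) g h,
          itc_mul hmetab l' (memC _ _) (memC _ _)]
        have hT1 : itc ⁅⁅(x : G), h⁆, g⁆ l' = 1 := by
          rw [itc_swap hmetab l' (memC _ _) g]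
          have h3 : itc ⁅(x : G), h⁆ l' = itc (x : G) (h :: l') := rfl
          rw [h3, Hvan_le H (i' + 1) x hx (h :: l') hlH
            (by simp only [List.length_cons]; omega)]
          group
        have hT2 : itc ⁅(x : G), ⁅g, h⁆⁆ l' = 1 :=
          ML hc0 hle hnorm j (Nat.le_of_succ_le hj) i' x hx ⁅g, h⁆ hghcj l'
            (fun a ha => hlH a (List.mem_cons_of_mem h ha)) hlen'
        rw [hT1, hT2, mul_one]

end InnBasisAux

open scoped commutatorElement

/-- Let `G` be a metabelian group and let `H` be a subnormal subgroup of defect `d` of `G`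
which is an Inn-basis of `G` (i.e. `C_G(H) = Z(G)`).  Then `Z_i(H) ≤ Z_{i+d}(G)` for every
positive integer `i`; in particular, if `H` is nilpotent of class `c` then `G` is nilpotent
of class at most `c + d`. -/
theorem upperCentralSeries_le_of_subnormal_innBasis_metabelian {G : Type*} [Group G]
    (hmetab : ⁅commutator G, commutator G⁆ = (⊥ : Subgroup G))
    (H : Subgroup G) (d : ℕ) (c : ℕ → Subgroup G)
    (hc0 : c 0 = H) (hcd : c d = ⊤)
    (hle : ∀ i < d, c i ≤ c (i + 1))
    (hnorm : ∀ i < d, ∀ x ∈ c i, ∀ g ∈ c (i + 1), g * x * g⁻¹ ∈ c i)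
    (hbasis : Subgroup.centralizer (H : Set G) = Subgroup.center G) :
    (∀ i : ℕ, 0 < i → (upperCentralSeries H i).map H.subtype ≤ upperCentralSeries G (i + d)) ∧
      (∀ k : ℕ, upperCentralSeries H k = ⊤ → upperCentralSeries G (k + d) = ⊤) := by
  constructor
  · intro i hi
    obtain ⟨i', rfl⟩ : ∃ i', i = i' + 1 := ⟨i - 1, (Nat.succ_pred_eq_of_pos hi).symm⟩
    intro xg hxg
    rw [Subgroup.mem_map] at hxg
    obtain ⟨x, hx, rfl⟩ := hxg
    have he : i' + 1 + d = (i' + d) + 1 := by omega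
    rw [he, upperCentralSeries, mem_upperCentralSeries_succ_iff]
    intro y
    have hy : y ∈ c d := hcd ▸ Subgroup.mem_top y
    have hv := InnBasisAux.ML hmetab hc0 hle hnorm d le_rfl i' x hx y hy
    exact InnBasisAux.uc_of_van (i' + d) _
      (InnBasisAux.lemC hmetab hbasis (i' + d) _ (InnBasisAux.memC _ _) hv)
  · intro k hk
    cases k with
    | zero =>
      have htriv : ∀ y : G, y ∈ H → y = 1 := by
        intro y hy
        have h1 : (⟨y, hy⟩ : H) ∈ upperCentralSeries H 0 := hk.symm ▸ Subgroup.mem_top _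
        rw [upperCentralSeries, upperCentralSeries_zero, Subgroup.mem_bot] at h1
        exact congrArg Subtype.val h1
      have hcen : Subgroup.center G = ⊤ := by
        rw [← hbasis, eq_top_iff]
        intro g _
        rw [Subgroup.mem_centralizer_iff]
        intro h hh
        rw [htriv h hh, one_mul, mul_one]
      cases d with
      | zero =>
        have hHtop : H = ⊤ := hc0 ▸ hcd
        rw [eq_top_iff]
        intro g _
        have hg1 : g = 1 := htriv g (hHtop.symm ▸ Subgroup.mem_top g)
        exact Subgroup.mem_bot.mpr hg1
      | succ d' =>
        have h1 : upperCentralSeries G 1 = ⊤ := by rw [upperCentralSeries, upperCentralSeries_one]; exact hcen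
        have h2 := upperCentralSeries_mono G (show 1 ≤ 0 + (d' + 1) by omega)
        rw [upperCentralSeries] at h1; rw [h1] at h2
        exact eq_top_iff.mpr h2
    | succ k' =>
      have key : ∀ h ∈ H, ∀ g : G, ⁅h, g⁆ ∈ upperCentralSeries G (k' + d) := by
        intro h hh g
        have hxtop : (⟨h, hh⟩ : H) ∈ upperCentralSeries H (k' + 1) :=
          hk.symm ▸ Subgroup.mem_top _
        have hv := InnBasisAux.ML hmetab hc0 hle hnorm d le_rfl k' ⟨h, hh⟩ hxtop g
          (hcd ▸ Subgroup.mem_top g)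
        exact InnBasisAux.uc_of_van _ _
          (InnBasisAux.lemC hmetab hbasis _ _ (InnBasisAux.memC _ _) hv)
      rw [eq_top_iff]
      intro w0 _
      have he : k' + 1 + d = (k' + d) + 1 := by omega
      rw [he, upperCentralSeries, mem_upperCentralSeries_succ_iff]
      intro w1
      show ⁅w0, w1⁆ ∈ upperCentralSeries G (k' + d)
      refine InnBasisAux.uc_of_van _ _
        (InnBasisAux.lemC hmetab hbasis _ _ (InnBasisAux.memC _ _) ?_)
      intro l hlH hlen
      cases l with
      | nil =>
        simp only [List.length_nil] at hlen
        have hd0 : d = 0 := by omega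
        have hk0 : k' = 0 := by omega
        subst hd0
        subst hk0
        have hHtop : H = ⊤ := hc0 ▸ hcd
        have hw1 : w1 ∈ H := hHtop.symm ▸ Subgroup.mem_top w1
        have h1 := InnBasisAux.Hvan H 1 ⟨w1, hw1⟩ (hk.symm ▸ Subgroup.mem_top _) [w0]
          (fun a ha => by
            rw [List.mem_singleton.mp ha]; exact hHtop.symm ▸ Subgroup.mem_top w0) rfl
        have h2 : ⁅w1, w0⁆ = 1 := by simpa [InnBasisAux.itc] using h1
        rw [InnBasisAux.itc_nil]
        exact commutatorElement_eq_one_iff_commute.mpr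
          ((commutatorElement_eq_one_iff_commute.mp h2).symm)
      | cons h1 l' =>
        have hh1 : h1 ∈ H := hlH h1 (List.mem_cons_self)
        have hlen' : l'.length + 1 = k' + d := by simpa using hlen
        rw [InnBasisAux.itc_cons, InnBasisAux.dagger hmetab w0 w1 h1,
          InnBasisAux.itc_mul hmetab l' (InnBasisAux.memC _ _) (InnBasisAux.memC _ _)]
        have hb : ⁅w0, h1⁆ ∈ upperCentralSeries G (l'.length + 1) := by
          rw [hlen', ← commutatorElement_inv]
          exact inv_mem (key h1 hh1 w0)
        have hc1 : ⁅w1, h1⁆ ∈ upperCentralSeries G (l'.length + 1) := by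
          rw [hlen', ← commutatorElement_inv]
          exact inv_mem (key h1 hh1 w1)
        have hb2 : ⁅⁅w0, h1⁆, w1⁆ ∈ upperCentralSeries G l'.length :=
          mem_upperCentralSeries_succ_iff.mp hb w1
        have hc2 : ⁅w0, ⁅w1, h1⁆⁆ ∈ upperCentralSeries G l'.length := by
          have h3 : ⁅⁅w1, h1⁆, w0⁆ ∈ upperCentralSeries G l'.length :=
            mem_upperCentralSeries_succ_iff.mp hc1 w0
          rw [← commutatorElement_inv]
          exact inv_mem h3
        rw [InnBasisAux.van_of_uc l'.length _ hb2 l' rfl,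
          InnBasisAux.van_of_uc l'.length _ hc2 l' rfl, mul_one]
end

section
/- Let the subgroup H be an Aut-basis of the group G and let N = H^G be the normal closure of H in G. Then Hom(G/N, Z(H)) = 0, i.e., the only group homomorphism from G/N to the centre of H is the trivial one. -/
/-- Let the subgroup `H` be an Aut-basis of the group `G` and let `N = H^G` be the normal
closure of `H` in `G`.  Then `Hom(G/N, Z(H)) = 0`. -/
theorem hom_quotient_normalClosure_to_center_eq_one {G : Type*} [Group G] (H : Subgroup G)
    (hbasis : ∀ φ : G ≃* G, (∀ h ∈ H, φ h = h) → ∀ g : G, φ g = g) :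
    ∀ f : (G ⧸ Subgroup.normalClosure (H : Set G)) →* Subgroup.center H, f = 1 := by
  intro f
  -- Step 1: Z(H) ⊆ Z(G)
  have hZ : ∀ z : Subgroup.center H, ∀ x : G, x * ((z : H) : G) = ((z : H) : G) * x := by
    intro z x
    have hfix : ∀ h ∈ H, (MulAut.conj ((z : H) : G)) h = h := by
      intro h hh
      have hz := (Subgroup.mem_center_iff.mp z.2) ⟨h, hh⟩
      have hz' : (h : G) * ((z : H) : G) = ((z : H) : G) * h := congrArg Subtype.val hz
      simp only [MulAut.conj_apply]
      rw [← hz']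
      group
    have := hbasis (MulAut.conj ((z : H) : G)) hfix x
    simp only [MulAut.conj_apply] at this
    calc x * ((z : H) : G) = ((z : H) : G) * x * ((z : H) : G)⁻¹ * ((z : H) : G) := by
          rw [this]
      _ = ((z : H) : G) * x := by group
  set N := Subgroup.normalClosure (H : Set G) with hN
  -- the "displacement" map
  set c : G → G := fun g => ((f (QuotientGroup.mk g) : H) : G) with hc
  have hcH : ∀ g, c g ∈ H := fun g => ((f (QuotientGroup.mk g) : H)).2
  have hcN : ∀ g, c g ∈ N := fun g => Subgroup.subset_normalClosure (hcH g)
  have hmkc : ∀ g, (QuotientGroup.mk (c g) : G ⧸ N) = 1 := fun g =>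
    (QuotientGroup.eq_one_iff _).mpr (hcN g)
  have hcomm : ∀ g x : G, x * c g = c g * x := fun g x => hZ (f (QuotientGroup.mk g)) x
  have hcmul : ∀ a b : G, c (a * b) = c a * c b := by
    intro a b
    simp only [hc]
    rw [show (QuotientGroup.mk (a * b) : G ⧸ N) = QuotientGroup.mk a * QuotientGroup.mk b from
      rfl, map_mul]
    rfl
  have hceq : ∀ a b : G, (QuotientGroup.mk a : G ⧸ N) = QuotientGroup.mk b → c a = c b := by
    intro a b h
    simp only [hc]
    exact congrArg (fun q => ((f q : H) : G)) h
  -- the endomorphism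
  let φ : G →* G :=
    { toFun := fun g => g * c g
      map_one' := by
        have : c 1 = 1 := by
          have : (QuotientGroup.mk (1 : G) : G ⧸ N) = 1 := rfl
          show ((f (1 : G ⧸ Subgroup.normalClosure (H : Set G)) : H) : G) = 1
          simp
        simp [this]
      map_mul' := by
        intro a b
        show a * b * c (a * b) = a * c a * (b * c b)
        rw [hcmul a b]
        rw [show a * c a * (b * c b) = a * (c a * b) * c b from by group, ← hcomm a b]
        group }
  have hφ : ∀ g, φ g = g * c g := fun _ => rfl
  have hmkφ : ∀ g, (QuotientGroup.mk (φ g) : G ⧸ N) = QuotientGroup.mk g := by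
    intro g
    rw [hφ]
    rw [show (QuotientGroup.mk (g * c g) : G ⧸ N) = QuotientGroup.mk g * QuotientGroup.mk (c g)
      from rfl, hmkc, mul_one]
  have hbij : Function.Bijective φ := by
    constructor
    · intro a b hab
      have h1 : (QuotientGroup.mk a : G ⧸ N) = QuotientGroup.mk b := by
        rw [← hmkφ a, ← hmkφ b, hab]
      have h2 := hceq a b h1
      rw [hφ, hφ, h2] at hab
      exact mul_right_cancel hab
    · intro y
      refine ⟨y * (c y)⁻¹, ?_⟩
      have h1 : (QuotientGroup.mk (y * (c y)⁻¹) : G ⧸ N) = QuotientGroup.mk y := by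
        rw [show (QuotientGroup.mk (y * (c y)⁻¹) : G ⧸ N)
          = QuotientGroup.mk y * (QuotientGroup.mk (c y))⁻¹ from rfl, hmkc]
        group
      rw [hφ, hceq _ _ h1]
      group
  let e : G ≃* G := MulEquiv.ofBijective φ hbij
  have hefix : ∀ h ∈ H, e h = h := by
    intro h hh
    have hh1 : (QuotientGroup.mk h : G ⧸ N) = 1 :=
      (QuotientGroup.eq_one_iff _).mpr (Subgroup.subset_normalClosure hh)
    have hh1' : (QuotientGroup.mk h : G ⧸ Subgroup.normalClosure (H : Set G)) = 1 := hh1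
    have : c h = 1 := by
      show ((f (QuotientGroup.mk h : G ⧸ Subgroup.normalClosure (H : Set G)) : H) : G) = 1
      rw [hh1']
      simp
    show φ h = h
    rw [hφ, this, mul_one]
  have hid : ∀ g, c g = 1 := by
    intro g
    have := hbasis e hefix g
    have h2 : φ g = g := this
    rw [hφ] at h2
    calc c g = g⁻¹ * (g * c g) := by group
      _ = 1 := by rw [h2]; group
  ext q
  have h1 : ((f (QuotientGroup.mk q) : H) : G) = 1 := hid q
  have h2 : (f (QuotientGroup.mk q) : H) = 1 := Subtype.ext h1
  simpa using Subtype.ext h2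
end

section
/- Let N be a normal subgroup of a group G containing Z(G). Then N is an Aut-basis of G if and only if C_G(N) = Z(G) and Hom(G/N, Z(G)) = 0. -/
/-- Let `N` be a normal subgroup of a group `G` containing `Z(G)`.  Then `N` is an
Aut-basis of `G` if and only if `C_G(N) = Z(G)` and `Hom(G/N, Z(G)) = 0`. -/
theorem autBasis_iff_centralizer_eq_center_and_hom_eq_one {G : Type*} [Group G]
    (N : Subgroup G) [N.Normal] (hZ : Subgroup.center G ≤ N) :
    (∀ φ : G ≃* G, (∀ x ∈ N, φ x = x) → ∀ g : G, φ g = g) ↔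
      (Subgroup.centralizer (N : Set G) = Subgroup.center G ∧
        ∀ f : (G ⧸ N) →* Subgroup.center G, f = 1) := by
  constructor
  · intro h
    constructor
    · apply le_antisymm
      · intro c hc
        have hfix : ∀ x ∈ N, (MulAut.conj c) x = x := by
          intro x hx
          have := Subgroup.mem_centralizer_iff.mp hc x hx
          simp only [MulAut.conj_apply]
          rw [← this]
          group
        have := h (MulAut.conj c) hfix
        rw [Subgroup.mem_center_iff]
        intro g
        have hg := this g
        simp only [MulAut.conj_apply] at hg
        calc g * c = (c * g * c⁻¹) * c := by rw [hg]
          _ = c * g := by group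
      · exact Subgroup.center_le_centralizer _
    · intro f
      set f' : G →* Subgroup.center G := f.comp (QuotientGroup.mk' N) with hf'
      have hcent : ∀ g x : G, x * (f' g : G) = (f' g : G) * x := fun g x =>
        Subgroup.mem_center_iff.mp (f' g).2 x
      have hone : ∀ z : G, z ∈ Subgroup.center G → f' z = 1 := by
        intro z hz
        have h1 : (QuotientGroup.mk' N) z = 1 := (QuotientGroup.eq_one_iff z).mpr (hZ hz)
        rw [hf', MonoidHom.comp_apply, h1, map_one]
      have honeN : ∀ z : G, z ∈ N → f' z = 1 := by
        intro z hz
        have h1 : (QuotientGroup.mk' N) z = 1 := (QuotientGroup.eq_one_iff z).mpr hz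
        rw [hf', MonoidHom.comp_apply, h1, map_one]
      have hval : ∀ g : G, f' ((f' g : G)) = 1 := fun g => hone _ (f' g).2
      let φ : G ≃* G :=
        { toFun := fun g => g * f' g
          invFun := fun g => g * ((f' g : G))⁻¹
          left_inv := by
            intro g
            have : f' (g * f' g) = f' g := by rw [map_mul, hval, mul_one]
            simp [this]
          right_inv := by
            intro g
            have : f' (g * ((f' g : G))⁻¹) = f' g := by
              rw [map_mul, map_inv, hval]; simp
            simp [this]
          map_mul' := by
            intro g h
            show (g * h) * ((f' (g * h) : G)) = (g * (f' g : G)) * (h * (f' h : G))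
            rw [map_mul]
            push_cast
            calc g * h * ((f' g : G) * (f' h : G))
                = g * (h * (f' g : G)) * (f' h : G) := by group
              _ = g * ((f' g : G) * h) * (f' h : G) := by rw [hcent g h]
              _ = g * (f' g : G) * (h * (f' h : G)) := by group }
      have hfixN : ∀ x ∈ N, φ x = x := by
        intro x hx
        show x * (f' x : G) = x
        rw [honeN x hx]; simp
      have := h φ hfixN
      ext q
      have hq : q * (f' q : G) = q := this q
      have h1 : (f' q : G) = 1 :=
        mul_left_cancel (a := q) (by rw [hq, mul_one])
      simpa [hf'] using h1
  · rintro ⟨hC, hf⟩ φ hφ g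
    have hmem : ∀ g : G, ((φ g)⁻¹ * g) ∈ Subgroup.center G := by
      intro g
      rw [← hC, Subgroup.mem_centralizer_iff]
      intro n hn
      have hconj : φ (g * n * g⁻¹) = g * n * g⁻¹ :=
        hφ _ (Subgroup.Normal.conj_mem ‹N.Normal› n hn g)
      have hexp : φ (g * n * g⁻¹) = φ g * n * (φ g)⁻¹ := by
        rw [map_mul, map_mul, map_inv, hφ n hn]
      have key : φ g * n * (φ g)⁻¹ = g * n * g⁻¹ := by rw [← hexp, hconj]
      calc n * ((φ g)⁻¹ * g) = (φ g)⁻¹ * (φ g * n * (φ g)⁻¹) * g := by group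
        _ = (φ g)⁻¹ * (g * n * g⁻¹) * g := by rw [key]
        _ = (φ g)⁻¹ * g * n := by group
    let F : G →* Subgroup.center G :=
      { toFun := fun g => ⟨(φ g)⁻¹ * g, hmem g⟩
        map_one' := by ext; simp
        map_mul' := by
          intro g h
          ext
          push_cast
          rw [map_mul]
          calc (φ g * φ h)⁻¹ * (g * h)
              = (φ h)⁻¹ * ((φ g)⁻¹ * g) * h := by group
            _ = ((φ g)⁻¹ * g) * (φ h)⁻¹ * h := by
                rw [Subgroup.mem_center_iff.mp (hmem g) ((φ h)⁻¹)]
            _ = (φ g)⁻¹ * g * ((φ h)⁻¹ * h) := by group }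
    have hFN : ∀ n ∈ N, F n = 1 := by
      intro n hn
      ext
      simp [F, hφ n hn]
    let Fbar : (G ⧸ N) →* Subgroup.center G := QuotientGroup.lift N F hFN
    have hFg : F g = 1 := by
      have : Fbar = 1 := hf Fbar
      have := congrArg (fun k => k (QuotientGroup.mk g : G ⧸ N)) this
      exact this
    have : (φ g)⁻¹ * g = 1 := congrArg Subtype.val hFg
    calc φ g = φ g * ((φ g)⁻¹ * g) := by rw [this, mul_one]
      _ = g := by group
end

section
/- Let H be a normal subgroup of the group K contained in the hypercentre of K. Then one of the following holds: either (a) Hom(K/H, Z(K) ∩ H) ≠ 0, i.e., there is a non-trivial homomorphism from K/H to Z(K) ∩ H; or (b) Z_i(H) ≤ Z_i(K) for all natural numbers i. -/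
universe u

theorem Subgroup.normal_iSup_of_normal {G : Type u} [Group G] {ι : Sort*}
    (f : ι → Subgroup G) (h : ∀ i, (f i).Normal) : (⨆ i, f i).Normal := by
  constructor
  intro x hx g
  refine Subgroup.iSup_induction (C := fun y => g * y * g⁻¹ ∈ ⨆ i, f i) f hx
    (fun i y hy => le_iSup f i ((h i).conj_mem y hy g)) (by simpa using Subgroup.one_mem _) ?_
  intro a b ha hb
  have hab : g * (a * b) * g⁻¹ = (g * a * g⁻¹) * (g * b * g⁻¹) := by group
  rw [hab]; exact mul_mem ha hb

/-- The transfinite upper central series of a group, as ordinal-indexed normal subgroups. -/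
noncomputable def transUpperCentralSeriesAux (G : Type u) [Group G] :
    Ordinal.{u} → {H : Subgroup G // H.Normal} := fun o =>
  Ordinal.limitRecOn o
    ⟨⊥, inferInstance⟩
    (fun _ Z => ⟨@Subgroup.upperCentralSeriesStep G _ Z.1 Z.2, by
      haveI := Z.2; rw [Subgroup.upperCentralSeriesStep_eq_comap_center]; infer_instance⟩)
    (fun o _ ih => ⟨⨆ (o' : Ordinal.{u}) (ho' : o' < o), (ih o' ho').1,
      Subgroup.normal_iSup_of_normal _ fun o' =>
        Subgroup.normal_iSup_of_normal _ fun ho' => (ih o' ho').2⟩)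

/-- The transfinite upper central series. -/
noncomputable def transUpperCentralSeries (G : Type u) [Group G] (o : Ordinal.{u}) :
    Subgroup G := (transUpperCentralSeriesAux G o).1

/-- The hypercentre of a group: the union of the transfinite upper central series. -/
noncomputable def hypercenter (G : Type u) [Group G] : Subgroup G :=
  ⨆ o : Ordinal.{u}, transUpperCentralSeries G o

/-- A group is hypercentral if it equals the union of its transfinite upper central series. -/
def IsHypercentral (G : Type u) [Group G] : Prop := hypercenter G = ⊤

/-- The hypercentral length: the least ordinal `o` with `Z_o(G) = G`. -/
noncomputable def hypercentralLength (G : Type u) [Group G] : Ordinal.{u} :=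
  sInf {o : Ordinal.{u} | transUpperCentralSeries G o = ⊤}

/-- A group is locally nilpotent if every finitely generated subgroup is nilpotent. -/
def IsLocallyNilpotent (G : Type*) [Group G] : Prop :=
  ∀ S : Subgroup G, S.FG → Group.IsNilpotent S

section AuxLemmas

variable {K : Type u} [Group K]

/-- Iterated commutator `[[…[z,k₁],k₂]…,kₙ]`. -/
private def iterComm : K → List K → K
  | z, [] => z
  | z, k :: l => iterComm (z * k * z⁻¹ * k⁻¹) l

private theorem iterComm_mem (N : Subgroup K) [N.Normal] :
    ∀ (l : List K) (z : K), z ∈ N → iterComm z l ∈ N := by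
  intro l
  induction l with
  | nil => intro z hz; exact hz
  | cons k l ih =>
    intro z hz
    refine ih _ ?_
    have h2 : k * z⁻¹ * k⁻¹ ∈ N := Subgroup.Normal.conj_mem ‹N.Normal› _ (inv_mem hz) k
    have : z * k * z⁻¹ * k⁻¹ = z * (k * z⁻¹ * k⁻¹) := by group
    rw [this]; exact mul_mem hz h2

private theorem iterComm_eq_one :
    ∀ (l : List K) (z : K), z ∈ upperCentralSeries K l.length → iterComm z l = 1 := by
  intro l
  induction l with
  | nil =>
    intro z hz
    simpa [iterComm] using (Subgroup.mem_bot.mp hz : z = 1)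
  | cons k l ih =>
    intro z hz
    exact ih _ (mem_upperCentralSeries_succ_iff.mp hz k)

private theorem iterComm_mem_center :
    ∀ (l : List K) (z : K), z ∈ upperCentralSeries K (l.length + 1) →
      iterComm z l ∈ Subgroup.center K := by
  intro l
  induction l with
  | nil =>
    intro z hz
    simpa [iterComm] using (upperCentralSeries_one K ▸ hz)
  | cons k l ih =>
    intro z hz
    exact ih _ (mem_upperCentralSeries_succ_iff.mp hz k)

private theorem iterComm_mul :
    ∀ (l : List K) (z w : K), z ∈ upperCentralSeries K (l.length + 1) →
      w ∈ upperCentralSeries K (l.length + 1) →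
      iterComm (z * w) l = iterComm z l * iterComm w l := by
  intro l
  induction l with
  | nil => intro z w _ _; rfl
  | cons k l ih =>
    intro z w hz hw
    have hv : z * k * z⁻¹ * k⁻¹ ∈ upperCentralSeries K (l.length + 1) :=
      mem_upperCentralSeries_succ_iff.mp hz k
    have hu : w * k * w⁻¹ * k⁻¹ ∈ upperCentralSeries K (l.length + 1) :=
      mem_upperCentralSeries_succ_iff.mp hw k
    set u := w * k * w⁻¹ * k⁻¹ with hu_def
    set v := z * k * z⁻¹ * k⁻¹ with hv_def
    have hd : z * u * z⁻¹ * u⁻¹ ∈ upperCentralSeries K l.length := by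
      have h1 : u * z * u⁻¹ * z⁻¹ ∈ upperCentralSeries K l.length :=
        mem_upperCentralSeries_succ_iff.mp hu z
      have : z * u * z⁻¹ * u⁻¹ = (u * z * u⁻¹ * z⁻¹)⁻¹ := by group
      rw [this]; exact inv_mem h1
    have hid : (z * w) * k * (z * w)⁻¹ * k⁻¹ = (z * u * z⁻¹ * u⁻¹) * (u * v) := by
      rw [hu_def, hv_def]; group
    show iterComm ((z * w) * k * (z * w)⁻¹ * k⁻¹) l = iterComm v l * iterComm u l
    rw [hid, ih _ _ (upperCentralSeries_mono K (Nat.le_succ _) hd) (mul_mem hu hv),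
      iterComm_eq_one l _ hd, one_mul, ih _ _ hu hv]
    exact ((Subgroup.mem_center_iff.mp (iterComm_mem_center l _ hu)) (iterComm v l)).symm

private theorem exists_iterComm_ne_one :
    ∀ (n : ℕ) (z : K), z ∉ upperCentralSeries K n →
      ∃ l : List K, l.length = n ∧ iterComm z l ≠ 1 := by
  intro n
  induction n with
  | zero =>
    intro z hz
    refine ⟨[], rfl, ?_⟩
    exact fun h => hz (Subgroup.mem_bot.mpr h)
  | succ n ih =>
    intro z hz
    have hk : ∃ k, z * k * z⁻¹ * k⁻¹ ∉ upperCentralSeries K n := by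
      by_contra h; push_neg at h
      exact hz (mem_upperCentralSeries_succ_iff.mpr h)
    obtain ⟨k, hk⟩ := hk
    obtain ⟨l, hl, hne⟩ := ih _ hk
    exact ⟨k :: l, by simp [hl], hne⟩

private theorem tucs_zero : transUpperCentralSeries K 0 = ⊥ := by
  simp [transUpperCentralSeries, transUpperCentralSeriesAux]

private theorem tucs_normal (o : Ordinal.{u}) : (transUpperCentralSeries K o).Normal :=
  (transUpperCentralSeriesAux K o).2

private theorem tucs_succ (o : Ordinal.{u}) :
    transUpperCentralSeries K (Order.succ o) =
      @Subgroup.upperCentralSeriesStep K _ (transUpperCentralSeries K o) (tucs_normal o) := by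
  simp only [transUpperCentralSeries, transUpperCentralSeriesAux, Ordinal.limitRecOn_succ]

private theorem tucs_limit {o : Ordinal.{u}} (h : Order.IsSuccLimit o) :
    transUpperCentralSeries K o =
      ⨆ (o' : Ordinal.{u}) (_ : o' < o), transUpperCentralSeries K o' := by
  simp only [transUpperCentralSeries, transUpperCentralSeriesAux,
    Ordinal.limitRecOn_limit _ _ _ _ h]

private theorem tucs_le_succ (o : Ordinal.{u}) :
    transUpperCentralSeries K o ≤ transUpperCentralSeries K (Order.succ o) := by
  rw [tucs_succ]
  intro x hx y
  haveI := tucs_normal (K := K) o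
  have h2 : y * x⁻¹ * y⁻¹ ∈ transUpperCentralSeries K o :=
    Subgroup.Normal.conj_mem this _ (inv_mem hx) y
  have : x * y * x⁻¹ * y⁻¹ = x * (y * x⁻¹ * y⁻¹) := by group
  rw [commutatorElement_def, this]; exact mul_mem hx h2

private theorem tucs_mono {o' o : Ordinal.{u}} (h : o' ≤ o) :
    transUpperCentralSeries K o' ≤ transUpperCentralSeries K o := by
  induction o using Ordinal.limitRecOn with
  | zero => rw [nonpos_iff_eq_zero.mp h]
  | add_one o ih =>
    rw [Ordinal.add_one_eq_succ] at h ⊢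
    rcases (Order.le_succ_iff_eq_or_le.mp h) with h1 | h1
    · rw [h1]
    · exact (ih h1).trans (tucs_le_succ o)
  | limit o hlim ih =>
    rcases eq_or_lt_of_le h with h1 | h1
    · rw [h1]
    · rw [tucs_limit hlim]
      exact le_iSup₂_of_le o' h1 le_rfl

private theorem mem_tucs_limit {o : Ordinal.{u}} (h : Order.IsSuccLimit o) {x : K}
    (hx : x ∈ transUpperCentralSeries K o) :
    ∃ o' < o, x ∈ transUpperCentralSeries K o' := by
  rw [tucs_limit h] at hx
  haveI : Nonempty {o' : Ordinal.{u} // o' < o} := ⟨⟨0, h.bot_lt⟩⟩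
  have hdir : Directed (· ≤ ·)
      (fun p : {o' : Ordinal.{u} // o' < o} => transUpperCentralSeries K p.1) := by
    intro p q
    rcases le_total p.1 q.1 with hpq | hpq
    · exact ⟨q, tucs_mono hpq, le_rfl⟩
    · exact ⟨p, le_rfl, tucs_mono hpq⟩
  have hx' : x ∈ ⨆ p : {o' : Ordinal.{u} // o' < o}, transUpperCentralSeries K p.1 := by
    rwa [iSup_subtype'] at hx
  obtain ⟨p, hp⟩ := (Subgroup.mem_iSup_of_directed hdir).mp hx'
  exact ⟨p.1, p.2, hp⟩

private theorem mem_hypercenter_exists {x : K} (hx : x ∈ hypercenter K) :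
    ∃ o : Ordinal.{u}, x ∈ transUpperCentralSeries K o := by
  have hdir : Directed (· ≤ ·) (fun o : Ordinal.{u} => transUpperCentralSeries K o) := by
    intro p q
    rcases le_total p q with hpq | hpq
    · exact ⟨q, tucs_mono hpq, le_rfl⟩
    · exact ⟨p, le_rfl, tucs_mono hpq⟩
  exact (Subgroup.mem_iSup_of_directed hdir).mp hx

private theorem mappedUCS_succ {H : Subgroup K} {i : ℕ} {x : K} :
    x ∈ (upperCentralSeries H (i + 1)).map H.subtype ↔
      x ∈ H ∧ ∀ h ∈ H, x * h * x⁻¹ * h⁻¹ ∈ (upperCentralSeries H i).map H.subtype := by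
  constructor
  · rintro ⟨x', hx', rfl⟩
    refine ⟨x'.2, fun h hh => ?_⟩
    have h1 := mem_upperCentralSeries_succ_iff.mp hx' ⟨h, hh⟩
    refine ⟨_, h1, ?_⟩
    simp [commutatorElement_def]
  · rintro ⟨hxH, hc⟩
    refine ⟨⟨x, hxH⟩, ?_, rfl⟩
    show (⟨x, hxH⟩ : H) ∈ upperCentralSeries H (i + 1)
    refine Subgroup.mem_upperCentralSeries_succ_iff.mpr ?_
    intro y
    obtain ⟨w, hw, hwe⟩ := hc y y.2
    have : (⟨x, hxH⟩ * y * (⟨x, hxH⟩ : H)⁻¹ * y⁻¹ : H) = w := by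
      apply Subtype.ext
      simpa using hwe.symm
    rw [commutatorElement_def, this]; exact hw

private theorem mappedUCS_conj {H : Subgroup K} [H.Normal] :
    ∀ (i : ℕ) {x : K}, x ∈ (upperCentralSeries H i).map H.subtype →
      ∀ k : K, k * x * k⁻¹ ∈ (upperCentralSeries H i).map H.subtype := by
  intro i
  induction i with
  | zero =>
    intro x hx k
    rw [show upperCentralSeries (↥H) 0 = ⊥ from rfl, Subgroup.map_bot] at *
    have : x = 1 := by simpa using hx
    simp [this]
  | succ i ih =>
    intro x hx k
    obtain ⟨hxH, hc⟩ := mappedUCS_succ.mp hx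
    rw [mappedUCS_succ]
    refine ⟨Subgroup.Normal.conj_mem ‹H.Normal› _ hxH k, fun h hh => ?_⟩
    have hh' : k⁻¹ * h * k ∈ H := by
      have := Subgroup.Normal.conj_mem ‹H.Normal› _ hh k⁻¹
      simpa using this
    have h1 := ih (hc _ hh') k
    have : (k * x * k⁻¹) * h * (k * x * k⁻¹)⁻¹ * h⁻¹ =
        k * (x * (k⁻¹ * h * k) * x⁻¹ * (k⁻¹ * h * k)⁻¹) * k⁻¹ := by group
    rw [this]; exact h1

end AuxLemmas

/-- Let `H` be a normal subgroup of the group `K` contained in the hypercentre of `K`.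
Then either (a) `Hom(K/H, Z(K) ∩ H) ≠ 0`, or (b) `Z_i(H) ≤ Z_i(K)` for all `i`. -/
theorem hom_ne_one_or_upperCentralSeries_le {K : Type u} [Group K]
    (H : Subgroup K) [H.Normal] (hhyp : H ≤ hypercenter K) :
    (∃ f : (K ⧸ H) →* (Subgroup.center K ⊓ H : Subgroup K), f ≠ 1) ∨
      (∀ i : ℕ, (upperCentralSeries H i).map H.subtype ≤ upperCentralSeries K i) := by
  by_cases hb : ∀ i : ℕ, (upperCentralSeries H i).map H.subtype ≤ upperCentralSeries K i
  · exact Or.inr hb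
  left
  classical
  push_neg at hb
  have hi := Nat.find_spec hb
  have hi0 : Nat.find hb ≠ 0 := by
    intro h
    rw [h, show upperCentralSeries (↥H) 0 = ⊥ from rfl, Subgroup.map_bot] at hi
    exact hi bot_le
  obtain ⟨j, hj⟩ := Nat.exists_eq_succ_of_ne_zero hi0
  have hMj : (upperCentralSeries H j).map H.subtype ≤ upperCentralSeries K j :=
    not_not.mp (Nat.find_min hb (by omega))
  rw [hj] at hi
  obtain ⟨x0, hx0C, hx0n⟩ := SetLike.not_le_iff_exists.mp hi
  have hCH : (upperCentralSeries H (j + 1)).map H.subtype ≤ H := Subgroup.map_subtype_le _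
  obtain ⟨γ, hγ⟩ := mem_hypercenter_exists (hhyp (hCH hx0C))
  set S : Set Ordinal.{u} := {α | ∃ y : K, y ∈ (upperCentralSeries H (j + 1)).map H.subtype ∧
    y ∈ transUpperCentralSeries K α ∧ y ∉ upperCentralSeries K (j + 1)} with hSdef
  have hSne : S.Nonempty := ⟨γ, x0, hx0C, hγ, hx0n⟩
  obtain ⟨y, hyC, hyT, hyn⟩ := csInf_mem hSne
  have hyH : y ∈ H := hCH hyC
  have hsucc : ∀ k : K, y * k * y⁻¹ * k⁻¹ ∈ upperCentralSeries K (j + 1) := by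
    rcases Ordinal.zero_or_succ_or_isSuccLimit (sInf S) with h0 | ⟨β, hβ⟩ | hlim
    · rw [h0, tucs_zero] at hyT
      exact absurd ((Subgroup.mem_bot.mp hyT) ▸ one_mem _) hyn
    · intro k
      rw [← hβ, tucs_succ] at hyT
      have h1 : y * k * y⁻¹ * k⁻¹ ∈ transUpperCentralSeries K β := hyT k
      have h2 : y * k * y⁻¹ * k⁻¹ ∈ (upperCentralSeries H (j + 1)).map H.subtype := by
        have h3 := mappedUCS_conj _ (inv_mem hyC) k
        have he : y * k * y⁻¹ * k⁻¹ = y * (k * y⁻¹ * k⁻¹) := by group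
        rw [he]; exact mul_mem hyC h3
      by_contra hn
      have hβS : β ∈ S := ⟨_, h2, h1, hn⟩
      have hle := csInf_le' hβS
      rw [← hβ] at hle
      exact absurd hle (not_le.mpr (Order.lt_succ β))
    · obtain ⟨β, hβlt, hβmem⟩ := mem_tucs_limit hlim hyT
      have hβS : β ∈ S := ⟨y, hyC, hβmem, hyn⟩
      exact absurd (csInf_le' hβS) (not_le.mpr hβlt)
  have hk1 : ∃ k1 : K, y * k1 * y⁻¹ * k1⁻¹ ∉ upperCentralSeries K j := by
    by_contra hcon; push_neg at hcon
    exact hyn (mem_upperCentralSeries_succ_iff.mpr hcon)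
  obtain ⟨k1, hk1⟩ := hk1
  obtain ⟨l, hl, hne⟩ := exists_iterComm_ne_one j _ hk1
  set Gf : K → K := fun k => iterComm (y * k * y⁻¹ * k⁻¹) l with hGf
  have hcomH : ∀ k : K, y * k * y⁻¹ * k⁻¹ ∈ H := by
    intro k
    have h3 : k * y⁻¹ * k⁻¹ ∈ H := Subgroup.Normal.conj_mem ‹H.Normal› _ (inv_mem hyH) k
    have he : y * k * y⁻¹ * k⁻¹ = y * (k * y⁻¹ * k⁻¹) := by group
    rw [he]; exact mul_mem hyH h3
  have hmul : ∀ a b : K, Gf (a * b) = Gf a * Gf b := by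
    intro a b
    have hv : y * a * y⁻¹ * a⁻¹ ∈ upperCentralSeries K (l.length + 1) := by
      rw [hl]; exact hsucc a
    have hu : y * b * y⁻¹ * b⁻¹ ∈ upperCentralSeries K (l.length + 1) := by
      rw [hl]; exact hsucc b
    have hd : a * (y * b * y⁻¹ * b⁻¹) * a⁻¹ * (y * b * y⁻¹ * b⁻¹)⁻¹ ∈
        upperCentralSeries K l.length := by
      have h1 := mem_upperCentralSeries_succ_iff.mp hu a
      have he : a * (y * b * y⁻¹ * b⁻¹) * a⁻¹ * (y * b * y⁻¹ * b⁻¹)⁻¹ =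
          ((y * b * y⁻¹ * b⁻¹) * a * (y * b * y⁻¹ * b⁻¹)⁻¹ * a⁻¹)⁻¹ := by group
      rw [he]; exact inv_mem h1
    have hid : y * (a * b) * y⁻¹ * (a * b)⁻¹ =
        (y * a * y⁻¹ * a⁻¹) *
          ((a * (y * b * y⁻¹ * b⁻¹) * a⁻¹ * (y * b * y⁻¹ * b⁻¹)⁻¹) *
            (y * b * y⁻¹ * b⁻¹)) := by group
    show iterComm (y * (a * b) * y⁻¹ * (a * b)⁻¹) l =
      iterComm (y * a * y⁻¹ * a⁻¹) l * iterComm (y * b * y⁻¹ * b⁻¹) l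
    rw [hid,
      iterComm_mul l _ _ hv
        (mul_mem (upperCentralSeries_mono K (Nat.le_succ _) hd) hu),
      iterComm_mul l _ _ (upperCentralSeries_mono K (Nat.le_succ _) hd) hu,
      iterComm_eq_one l _ hd, one_mul]
  have hcod : ∀ k : K, Gf k ∈ Subgroup.center K ⊓ H := by
    intro k
    refine Subgroup.mem_inf.mpr ⟨?_, ?_⟩
    · apply iterComm_mem_center
      rw [hl]; exact hsucc k
    · exact iterComm_mem H l _ (hcomH k)
  have hvanish : ∀ h ∈ H, Gf h = 1 := by
    intro h hh
    obtain ⟨_, hc⟩ := mappedUCS_succ.mp hyC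
    apply iterComm_eq_one
    rw [hl]
    exact hMj (hc h hh)
  set φ : K →* ↥(Subgroup.center K ⊓ H) :=
    MonoidHom.codRestrict (MonoidHom.mk' Gf hmul) _ hcod with hφ
  have hker : H ≤ φ.ker := by
    intro h hh
    rw [MonoidHom.mem_ker]
    apply Subtype.ext
    exact hvanish h hh
  refine ⟨QuotientGroup.lift H φ hker, ?_⟩
  intro heq
  apply hne
  have h1 : QuotientGroup.lift H φ hker (QuotientGroup.mk k1) = 1 := by rw [heq]; rfl
  rw [QuotientGroup.lift_mk'] at h1
  have h2 : Gf k1 = 1 := congrArg Subtype.val h1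
  exact h2
end
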